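/- arXiv:2107.02290 — 7 statements merged into one kernel-verified Lean document; each statement's English description precedes it below -/
import Mathlib

section
/- Let A_FF be invertible and A_CC be invertible. Define the F-relaxation error propagator E_F = I - fromBlocks(I_F, A_FF⁻¹·A_FC, 0, 0) and, for a scalar ω ∈ ℂ, the weighted C-relaxation error propagator E_C(ω) = I - ω·fromBlocks(0, 0, A_CC⁻¹·A_CF, I_C). Then E_F · E_C(ω) · E_F = P · (I_C - ω·A_CC⁻¹·A_Δ) · R_I, where P, R_I and the Schur complement A_Δ are as defined in the context. -/
open Matrix

theorem stmt_0 {F C : Type*} [Fintype F] [Fintype C] [DecidableEq F] [DecidableEq C]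
    (AFF : Matrix F F ℂ) (AFC : Matrix F C ℂ) (ACF : Matrix C F ℂ) (ACC : Matrix C C ℂ)
    (hFF : IsUnit AFF) (hCC : IsUnit ACC) (ω : ℂ)
    (EF : Matrix (F ⊕ C) (F ⊕ C) ℂ)
    (hEF : EF = 1 - Matrix.fromBlocks 1 (AFF⁻¹ * AFC) 0 0)
    (EC : Matrix (F ⊕ C) (F ⊕ C) ℂ)
    (hEC : EC = 1 - ω • Matrix.fromBlocks 0 0 (ACC⁻¹ * ACF) 1)
    (P : Matrix (F ⊕ C) C ℂ) (hP : P = Matrix.fromRows (-(AFF⁻¹ * AFC)) 1)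
    (RI : Matrix C (F ⊕ C) ℂ) (hRI : RI = Matrix.fromCols 0 1)
    (AΔ : Matrix C C ℂ) (hAΔ : AΔ = ACC - ACF * AFF⁻¹ * AFC) :
    EF * EC * EF = P * ((1 : Matrix C C ℂ) - ω • (ACC⁻¹ * AΔ)) * RI := by
  have h1 : ACC⁻¹ * ACC = 1 :=
    Matrix.nonsing_inv_mul ACC ((Matrix.isUnit_iff_isUnit_det ACC).mp hCC)
  subst hEF hEC hP hRI hAΔ
  rw [Matrix.fromRows_mul, Matrix.fromRows_mul_fromCols, Matrix.mul_zero, Matrix.mul_zero,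
    Matrix.mul_one, Matrix.mul_one]
  rw [show (1 : Matrix (F ⊕ C) (F ⊕ C) ℂ) = Matrix.fromBlocks 1 0 0 1 from
    Matrix.fromBlocks_one.symm]
  simp only [Matrix.fromBlocks_smul, sub_eq_add_neg, Matrix.fromBlocks_neg,
    Matrix.fromBlocks_add, Matrix.fromBlocks_multiply]
  congr 1 <;>
  · simp [Matrix.mul_add, Matrix.add_mul, Matrix.mul_smul, Matrix.smul_mul, mul_sub, sub_mul,
      Matrix.mul_assoc, h1, smul_sub, smul_smul, neg_add_rev, Matrix.neg_mul, Matrix.mul_neg]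
    try abel
    try simp
end

section
/- Let A_FF be invertible, let B_Δ : Matrix C C ℂ be invertible, and let X : Matrix C C ℂ be arbitrary. Then the two-level error propagator factors as (I - P·B_Δ⁻¹·R_I·A) · (P·X·R_I) = P·(I_C - B_Δ⁻¹·A_Δ)·X·R_I. In particular, with X = I_C - ω·A_Δ this gives the two-level MGRIT error propagator for FCF-relaxation with weighted C-relaxation: (I - P·B_Δ⁻¹·R_I·A)·P·(I - ω·A_Δ)·R_I = P·(I - B_Δ⁻¹·A_Δ)·(I - ω·A_Δ)·R_I. -/
open Matrix

theorem stmt_2 {F C : Type*} [Fintype F] [Fintype C] [DecidableEq F] [DecidableEq C]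
    (AFF : Matrix F F ℂ) (AFC : Matrix F C ℂ) (ACF : Matrix C F ℂ) (ACC : Matrix C C ℂ)
    (hFF : IsUnit AFF)
    (BΔ : Matrix C C ℂ) (hBΔ : IsUnit BΔ)
    (A : Matrix (F ⊕ C) (F ⊕ C) ℂ) (hA : A = Matrix.fromBlocks AFF AFC ACF ACC)
    (P : Matrix (F ⊕ C) C ℂ) (hP : P = Matrix.fromRows (-(AFF⁻¹ * AFC)) 1)
    (RI : Matrix C (F ⊕ C) ℂ) (hRI : RI = Matrix.fromCols 0 1)
    (AΔ : Matrix C C ℂ) (hAΔ : AΔ = ACC - ACF * AFF⁻¹ * AFC)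
    (X : Matrix C C ℂ) (ω : ℂ) :
    ((1 : Matrix (F ⊕ C) (F ⊕ C) ℂ) - P * BΔ⁻¹ * RI * A) * (P * X * RI) =
        P * (((1 : Matrix C C ℂ) - BΔ⁻¹ * AΔ) * X) * RI ∧
    ((1 : Matrix (F ⊕ C) (F ⊕ C) ℂ) - P * BΔ⁻¹ * RI * A) *
        (P * ((1 : Matrix C C ℂ) - ω • AΔ) * RI) =
      P * (((1 : Matrix C C ℂ) - BΔ⁻¹ * AΔ) * ((1 : Matrix C C ℂ) - ω • AΔ)) * RI := by

  have key : RI * A * P = AΔ := by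
    subst hA hP hRI hAΔ
    rw [Matrix.mul_assoc, Matrix.fromBlocks_mul_fromRows, Matrix.fromCols_mul_fromRows]
    simp [Matrix.mul_assoc]
    noncomm_ring
  have gen : ∀ Y : Matrix C C ℂ,
      ((1 : Matrix (F ⊕ C) (F ⊕ C) ℂ) - P * BΔ⁻¹ * RI * A) * (P * Y * RI) =
        P * (((1 : Matrix C C ℂ) - BΔ⁻¹ * AΔ) * Y) * RI := by
    intro Y
    have h1 : P * BΔ⁻¹ * RI * A * (P * Y * RI) = P * (BΔ⁻¹ * AΔ * Y) * RI := by
      calc P * BΔ⁻¹ * RI * A * (P * Y * RI)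
          = P * BΔ⁻¹ * (RI * A * P) * Y * RI := by simp only [Matrix.mul_assoc]
        _ = P * (BΔ⁻¹ * AΔ * Y) * RI := by rw [key]; simp only [Matrix.mul_assoc]
    rw [sub_mul, one_mul, h1, sub_mul, one_mul, Matrix.mul_sub, Matrix.sub_mul,
      Matrix.mul_assoc]
  exact ⟨gen X, gen _⟩
end

section
/- If A_FF is invertible, then for any X, Y : Matrix C C ℂ one has (P·X·R_I)·(P·Y·R_I) = P·(X·Y)·R_I. Consequently the composition of two weighted FCF relaxation sweeps with weights ω₁ and ω₂ (each of the form P·(I - ω·A_Δ)·R_I) equals the single operator P·(I - ω₂·A_Δ)·(I - ω₁·A_Δ)·R_I, which is the error propagator of weighted FCFCF-relaxation. -/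
open Matrix

theorem stmt_3 {F C : Type*} [Fintype F] [Fintype C] [DecidableEq F] [DecidableEq C]
    (AFF : Matrix F F ℂ) (AFC : Matrix F C ℂ) (ACF : Matrix C F ℂ) (ACC : Matrix C C ℂ)
    (hFF : IsUnit AFF)
    (P : Matrix (F ⊕ C) C ℂ) (hP : P = Matrix.fromRows (-(AFF⁻¹ * AFC)) 1)
    (RI : Matrix C (F ⊕ C) ℂ) (hRI : RI = Matrix.fromCols 0 1)
    (AΔ : Matrix C C ℂ) (hAΔ : AΔ = ACC - ACF * AFF⁻¹ * AFC)
    (ω₁ ω₂ : ℂ) :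
    (∀ X Y : Matrix C C ℂ, (P * X * RI) * (P * Y * RI) = P * (X * Y) * RI) ∧
    (P * ((1 : Matrix C C ℂ) - ω₂ • AΔ) * RI) * (P * ((1 : Matrix C C ℂ) - ω₁ • AΔ) * RI) =
      P * (((1 : Matrix C C ℂ) - ω₂ • AΔ) * ((1 : Matrix C C ℂ) - ω₁ • AΔ)) * RI := by
  have key : RI * P = 1 := by
    rw [hP, hRI, Matrix.fromCols_mul_fromRows]
    simp
  have h : ∀ X Y : Matrix C C ℂ, (P * X * RI) * (P * Y * RI) = P * (X * Y) * RI := by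
    intro X Y
    calc (P * X * RI) * (P * Y * RI) = P * X * (RI * P) * Y * RI := by
          simp only [Matrix.mul_assoc]
      _ = P * (X * Y) * RI := by rw [key]; simp only [Matrix.mul_one, Matrix.mul_assoc]
  exact ⟨h, h _ _⟩
end

section
/- Let R be a ring (not necessarily commutative), Θ, Ψ ∈ R, and N a positive natural number. Let A be the N×N matrix over R with identity diagonal, -Θ on the first subdiagonal, and zero elsewhere, and let B be the N×N matrix with identity diagonal, -Ψ on the first subdiagonal, and zero elsewhere. Then the matrix M = I - B⁻¹·A has entries M_{ij} = Ψ^{i-j-1}·(Θ - Ψ) for i > j, and M_{ij} = 0 for i ≤ j. -/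
theorem stmt_5 {R : Type*} [Ring R] (Θ Ψ : R) (N : ℕ) (hN : 0 < N)
    (A B Binv : Matrix (Fin N) (Fin N) R)
    (hA : ∀ i j : Fin N, A i j =
      if i = j then 1 else if (i : ℕ) = (j : ℕ) + 1 then -Θ else 0)
    (hB : ∀ i j : Fin N, B i j =
      if i = j then 1 else if (i : ℕ) = (j : ℕ) + 1 then -Ψ else 0)
    (hBinv₁ : B * Binv = 1) (hBinv₂ : Binv * B = 1) :
    ∀ i j : Fin N, ((1 : Matrix (Fin N) (Fin N) R) - Binv * A) i j =
      if (j : ℕ) < (i : ℕ) then Ψ ^ ((i : ℕ) - (j : ℕ) - 1) * (Θ - Ψ) else 0 := by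
  classical
  set C : Matrix (Fin N) (Fin N) R :=
    Matrix.of (fun i j => if (j : ℕ) ≤ (i : ℕ) then Ψ ^ ((i : ℕ) - (j : ℕ)) else 0) with hCdef
  have hCapp : ∀ i j : Fin N,
      C i j = if (j : ℕ) ≤ (i : ℕ) then Ψ ^ ((i : ℕ) - (j : ℕ)) else 0 := fun _ _ => rfl
  have hBC : B * C = 1 := by
    ext a b
    rw [Matrix.mul_apply, Matrix.one_apply]
    have hsplit : ∀ k : Fin N, B a k * C k b =
        (if a = k then C k b else 0) + (if (a : ℕ) = (k : ℕ) + 1 then -Ψ * C k b else 0) := by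
      intro k
      rw [hB]
      rcases eq_or_ne a k with h | h
      · subst h
        have h2 : ¬ ((a : ℕ) = (a : ℕ) + 1) := by omega
        simp [h2]
      · rw [if_neg h, if_neg h]
        by_cases h2 : (a : ℕ) = (k : ℕ) + 1
        · rw [if_pos h2, if_pos h2, zero_add]
        · rw [if_neg h2, if_neg h2, zero_mul, zero_add]
    rw [Finset.sum_congr rfl (fun k _ => hsplit k), Finset.sum_add_distrib]
    rw [Finset.sum_ite_eq Finset.univ a (fun k => C k b), if_pos (Finset.mem_univ a)]
    have h2 : (∑ k : Fin N, if (a : ℕ) = (k : ℕ) + 1 then -Ψ * C k b else 0) =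
        if h : 0 < (a : ℕ) then -Ψ * C ⟨(a : ℕ) - 1, by omega⟩ b else 0 := by
      split_ifs with h
      · rw [Finset.sum_eq_single_of_mem ⟨(a : ℕ) - 1, by omega⟩ (Finset.mem_univ _)]
        · rw [if_pos]
          show (a : ℕ) = ((a : ℕ) - 1) + 1
          omega
        · intro k _ hk
          rw [if_neg]
          intro hc
          exact hk (Fin.ext (by simp; omega))
      · apply Finset.sum_eq_zero
        intro k _
        rw [if_neg]
        omega
    rw [h2]
    clear hsplit h2
    split_ifs with h1 h2 h2
    · -- 0 < a, a = b
      subst h2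
      rw [hCapp, hCapp]
      rw [if_pos (le_refl _), if_neg (by show ¬ ((a : ℕ) ≤ (a : ℕ) - 1); omega)]
      simp
    · -- 0 < a, a ≠ b : C a b - Ψ * C (a-1) b = 0
      rw [hCapp, hCapp]
      have hab : (a : ℕ) ≠ (b : ℕ) := fun hc => h2 (Fin.ext hc)
      by_cases hba : (b : ℕ) ≤ (a : ℕ)
      · have hba' : (b : ℕ) ≤ (a : ℕ) - 1 := by omega
        rw [if_pos hba, if_pos (show (b : ℕ) ≤ ((⟨(a : ℕ) - 1, by omega⟩ : Fin N) : ℕ) from hba')]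
        have he : (a : ℕ) - (b : ℕ) = (((a : ℕ) - 1 - (b : ℕ)) + 1) := by omega
        rw [he, pow_succ']
        show Ψ * Ψ ^ _ + -Ψ * Ψ ^ (((⟨(a : ℕ) - 1, by omega⟩ : Fin N) : ℕ) - (b : ℕ)) = 0
        have hv : ((⟨(a : ℕ) - 1, by omega⟩ : Fin N) : ℕ) - (b : ℕ) = (a : ℕ) - 1 - (b : ℕ) := rfl
        rw [hv, neg_mul, add_neg_cancel]
      · rw [if_neg hba, if_neg (show ¬ ((b : ℕ) ≤ ((⟨(a : ℕ) - 1, by omega⟩ : Fin N) : ℕ)) by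
          show ¬ ((b : ℕ) ≤ (a : ℕ) - 1); omega)]
        simp
    · -- a = 0, a = b
      subst h2
      rw [hCapp, if_pos (le_refl _)]
      simp
    · -- a = 0, a ≠ b
      rw [hCapp, if_neg]
      · simp
      · have : (a : ℕ) ≠ (b : ℕ) := fun hc => h2 (Fin.ext hc)
        omega
  have hBinvC : Binv = C := by
    calc Binv = Binv * (B * C) := by rw [hBC, mul_one]
    _ = (Binv * B) * C := by rw [mul_assoc]
    _ = C := by rw [hBinv₂, one_mul]
  intro i j
  rw [Matrix.sub_apply, Matrix.one_apply, hBinvC, Matrix.mul_apply]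
  have hsplit : ∀ k : Fin N, C i k * A k j =
      (if k = j then C i k else 0) + (if (k : ℕ) = (j : ℕ) + 1 then C i k * -Θ else 0) := by
    intro k
    rw [hA]
    rcases eq_or_ne k j with h | h
    · subst h
      have h2 : ¬ ((k : ℕ) = (k : ℕ) + 1) := by omega
      simp [h2]
    · rw [if_neg h, if_neg h]
      by_cases h2 : (k : ℕ) = (j : ℕ) + 1
      · rw [if_pos h2, if_pos h2, zero_add]
      · rw [if_neg h2, if_neg h2, mul_zero, zero_add]
  rw [Finset.sum_congr rfl (fun k _ => hsplit k), Finset.sum_add_distrib]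
  rw [Finset.sum_ite_eq' Finset.univ j (fun k => C i k), if_pos (Finset.mem_univ j)]
  have h2 : (∑ k : Fin N, if (k : ℕ) = (j : ℕ) + 1 then C i k * -Θ else 0) =
      if h : (j : ℕ) + 1 < N then C i ⟨(j : ℕ) + 1, h⟩ * -Θ else 0 := by
    split_ifs with h
    · rw [Finset.sum_eq_single_of_mem ⟨(j : ℕ) + 1, h⟩ (Finset.mem_univ _)]
      · rw [if_pos rfl]
      · intro k _ hk
        rw [if_neg]
        intro hc
        exact hk (Fin.ext (by simp; omega))
    · apply Finset.sum_eq_zero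
      intro k _
      rw [if_neg]
      have := k.isLt
      omega
  rw [h2]
  clear hsplit h2
  rcases lt_trichotomy (j : ℕ) (i : ℕ) with hji | hji | hji
  · rw [if_pos hji, if_neg (show ¬ i = j by intro hc; subst hc; omega)]
    have hjN : (j : ℕ) + 1 < N := by have := i.isLt; omega
    rw [dif_pos hjN, hCapp, hCapp, if_pos (le_of_lt hji),
        if_pos (show ((⟨(j : ℕ) + 1, hjN⟩ : Fin N) : ℕ) ≤ (i : ℕ) by show (j : ℕ) + 1 ≤ (i : ℕ); omega)]
    have hv : ((⟨(j : ℕ) + 1, hjN⟩ : Fin N) : ℕ) = (j : ℕ) + 1 := rfl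
    rw [hv]
    have he2 : (i : ℕ) - ((j : ℕ) + 1) = (i : ℕ) - (j : ℕ) - 1 := by omega
    have he : (i : ℕ) - (j : ℕ) = ((i : ℕ) - (j : ℕ) - 1) + 1 := by omega
    rw [he2, he, pow_succ, mul_sub, mul_neg]
    abel_nf
    exact add_comm _ _
  · have hij : i = j := Fin.ext hji.symm
    subst hij
    rw [if_pos rfl, if_neg (lt_irrefl _), hCapp, if_pos (le_refl _), Nat.sub_self, pow_zero]
    split_ifs with h
    · rw [hCapp, if_neg (show ¬ ((⟨(i : ℕ) + 1, h⟩ : Fin N) : ℕ) ≤ (i : ℕ) by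
        show ¬ ((i : ℕ) + 1 ≤ (i : ℕ)); omega)]
      simp
    · simp
  · rw [if_neg (show ¬ i = j by intro hc; subst hc; omega), if_neg (by omega), hCapp,
      if_neg (by omega)]
    split_ifs with h
    · rw [hCapp, if_neg (show ¬ ((⟨(j : ℕ) + 1, h⟩ : Fin N) : ℕ) ≤ (i : ℕ) by
        show ¬ ((j : ℕ) + 1 ≤ (i : ℕ)); omega)]
      simp
    · simp
end

section
/- Let R be an algebra over ℂ (not necessarily commutative), Θ, Ψ ∈ R, ω ∈ ℂ, and N a positive natural number. Let A and B be the N×N matrices over R with identity diagonal and first subdiagonal entries -Θ and -Ψ respectively (zero elsewhere). Then the matrix E = (I - B⁻¹·A)·(I - ω·A) has entries: E_{ij} = 0 for i ≤ j; E_{j+1,j} = (1-ω)·(Θ - Ψ); and for i ≥ j+2, E_{ij} = (1-ω)·Ψ^{i-j-1}·(Θ - Ψ) + ω·Ψ^{i-j-2}·(Θ - Ψ)·Θ. -/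
/-- Multiplying on the right by a lower-bidiagonal matrix. -/
lemma mul_bidiag' {R : Type*} [Ring R] {N : ℕ} (M T : Matrix (Fin N) (Fin N) R)
    (d s : R) (hT : ∀ k j : Fin N, T k j = if k = j then d else if (k:ℕ) = (j:ℕ)+1 then s else 0)
    (i j : Fin N) :
    (M * T) i j = M i j * d + if h : (j:ℕ)+1 < N then M i ⟨(j:ℕ)+1, h⟩ * s else 0 := by
  rw [Matrix.mul_apply]
  split_ifs with h
  · set j' : Fin N := ⟨(j:ℕ)+1, h⟩ with hj'
    have hjj' : j ≠ j' := by simp [hj', Fin.ext_iff]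
    rw [← Finset.add_sum_erase _ _ (Finset.mem_univ j)]
    congr 1
    · rw [hT, if_pos rfl]
    · rw [Finset.sum_eq_single_of_mem j'
        (Finset.mem_erase.2 ⟨hjj'.symm, Finset.mem_univ _⟩)]
      · rw [hT, if_neg hjj'.symm, if_pos (by simp [hj'])]
      · intro k hk hkj'
        rw [hT, if_neg (fun hc => (Finset.mem_erase.1 hk).1 hc),
          if_neg (fun hc => hkj' (Fin.ext (by simpa [hj'] using hc))), mul_zero]
  · rw [add_zero, Finset.sum_eq_single_of_mem j (Finset.mem_univ _)]
    · rw [hT, if_pos rfl]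
    · intro k _ hk
      have := k.isLt
      rw [hT, if_neg hk, if_neg (by omega), mul_zero]

/-- Multiplying on the left by a lower-bidiagonal matrix. -/
lemma bidiag_mul' {R : Type*} [Ring R] {N : ℕ} (T M : Matrix (Fin N) (Fin N) R)
    (d s : R) (hT : ∀ i k : Fin N, T i k = if i = k then d else if (i:ℕ) = (k:ℕ)+1 then s else 0)
    (i j : Fin N) :
    (T * M) i j = d * M i j +
      if h : 0 < (i:ℕ) then
        s * M ⟨(i:ℕ)-1, Nat.lt_of_le_of_lt (Nat.sub_le _ _) i.isLt⟩ j else 0 := by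
  rw [Matrix.mul_apply]
  split_ifs with h
  · set i' : Fin N := ⟨(i:ℕ)-1, Nat.lt_of_le_of_lt (Nat.sub_le _ _) i.isLt⟩ with hi'
    have hii' : i ≠ i' := Fin.ne_of_val_ne (by simp [hi']; omega)
    rw [← Finset.add_sum_erase _ _ (Finset.mem_univ i)]
    congr 1
    · rw [hT, if_pos rfl]
    · rw [Finset.sum_eq_single_of_mem i'
        (Finset.mem_erase.2 ⟨hii'.symm, Finset.mem_univ _⟩)]
      · rw [hT, if_neg hii', if_pos (by simp [hi']; omega)]
      · intro k hk hki'
        rw [hT, if_neg (fun hc => (Finset.mem_erase.1 hk).1 hc.symm),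
          if_neg (fun hc => hki' (Fin.ext (by simp [hi']; omega))), zero_mul]
  · rw [add_zero, Finset.sum_eq_single_of_mem i (Finset.mem_univ _)]
    · rw [hT, if_pos rfl]
    · intro k _ hk
      rw [hT, if_neg (fun hc => hk hc.symm), if_neg (by omega), zero_mul]

theorem stmt_6 {R : Type*} [Ring R] [Algebra ℂ R] (Θ Ψ : R) (ω : ℂ) (N : ℕ) (hN : 0 < N)
    (A B Binv : Matrix (Fin N) (Fin N) R)
    (hA : ∀ i j : Fin N, A i j =
      if i = j then 1 else if (i : ℕ) = (j : ℕ) + 1 then -Θ else 0)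
    (hB : ∀ i j : Fin N, B i j =
      if i = j then 1 else if (i : ℕ) = (j : ℕ) + 1 then -Ψ else 0)
    (hBinv₁ : B * Binv = 1) (hBinv₂ : Binv * B = 1)
    (E : Matrix (Fin N) (Fin N) R)
    (hE : E = ((1 : Matrix (Fin N) (Fin N) R) - Binv * A) *
      ((1 : Matrix (Fin N) (Fin N) R) - ω • A)) :
    ∀ i j : Fin N,
      ((i : ℕ) ≤ (j : ℕ) → E i j = 0) ∧
      ((i : ℕ) = (j : ℕ) + 1 → E i j = (1 - ω) • (Θ - Ψ)) ∧
      ((j : ℕ) + 2 ≤ (i : ℕ) → E i j =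
        (1 - ω) • (Ψ ^ ((i : ℕ) - (j : ℕ) - 1) * (Θ - Ψ)) +
        ω • (Ψ ^ ((i : ℕ) - (j : ℕ) - 2) * (Θ - Ψ) * Θ)) := by
  -- explicit inverse of B
  set L : Matrix (Fin N) (Fin N) R :=
    Matrix.of (fun i j => if (j:ℕ) ≤ (i:ℕ) then Ψ ^ ((i:ℕ) - (j:ℕ)) else 0) with hL
  have hLapp : ∀ i j : Fin N, L i j = if (j:ℕ) ≤ (i:ℕ) then Ψ ^ ((i:ℕ) - (j:ℕ)) else 0 :=
    fun i j => rfl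
  have hBL : B * L = 1 := by
    ext i j
    rw [bidiag_mul' B L 1 (-Ψ) hB i j]
    split_ifs with h
    · rw [one_mul, hLapp, hLapp]
      simp only [Fin.val_mk]
      rcases lt_trichotomy (j:ℕ) (i:ℕ) with hij | hij | hij
      · rw [if_pos (by omega), if_pos (by omega),
          Matrix.one_apply_ne (by simp [Fin.ext_iff]; omega)]
        have e1 : (i:ℕ) - (j:ℕ) = ((i:ℕ) - 1 - (j:ℕ)) + 1 := by omega
        rw [e1, pow_succ']
        noncomm_ring
      · have : i = j := Fin.ext hij.symm
        subst this
        rw [if_pos le_rfl, Nat.sub_self, pow_zero, if_neg (by omega),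
          Matrix.one_apply_eq]
        noncomm_ring
      · rw [if_neg (by omega), if_neg (by omega),
          Matrix.one_apply_ne (by simp [Fin.ext_iff]; omega)]
        noncomm_ring
    · -- i = 0
      rw [add_zero, one_mul, hLapp]
      rcases eq_or_ne i j with rfl | hij
      · simp
      · rw [if_neg (by intro hc; exact hij (Fin.ext (by omega))), Matrix.one_apply_ne hij]
  have hBinvL : Binv = L := by
    calc Binv = Binv * (B * L) := by rw [hBL, mul_one]
    _ = (Binv * B) * L := by rw [mul_assoc]
    _ = L := by rw [hBinv₂, one_mul]
  -- entries of C = 1 - Binv * A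
  set C : Matrix (Fin N) (Fin N) R := (1 : Matrix (Fin N) (Fin N) R) - Binv * A with hC
  have hCapp : ∀ i j : Fin N,
      C i j = if (j:ℕ) < (i:ℕ) then Ψ ^ ((i:ℕ) - (j:ℕ) - 1) * (Θ - Ψ) else 0 := by
    intro i j
    rw [hC, Matrix.sub_apply, hBinvL, mul_bidiag' L A 1 (-Θ) hA i j]
    rcases lt_trichotomy (j:ℕ) (i:ℕ) with hij | hij | hij
    · have hjN : (j:ℕ)+1 < N := lt_of_le_of_lt hij i.isLt
      rw [dif_pos hjN, if_pos hij, Matrix.one_apply_ne (by simp [Fin.ext_iff]; omega),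
        hLapp, hLapp, if_pos (le_of_lt hij), if_pos (by simp; omega)]
      have e1 : (i:ℕ) - (j:ℕ) = ((i:ℕ) - (j:ℕ) - 1) + 1 := by omega
      have e2 : (i:ℕ) - ((⟨(j:ℕ)+1, hjN⟩ : Fin N) : ℕ) = (i:ℕ) - (j:ℕ) - 1 := by
        simp; omega
      rw [e1, pow_succ, e2]
      noncomm_ring
      abel
    · have : i = j := Fin.ext hij.symm
      subst this
      rw [if_neg (lt_irrefl _), Matrix.one_apply_eq, hLapp, if_pos le_rfl,
        Nat.sub_self, pow_zero, one_mul]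
      split_ifs with h
      · rw [hLapp, if_neg (by simp), zero_mul]
        simp
      · simp
    · rw [if_neg (by omega), Matrix.one_apply_ne (by simp [Fin.ext_iff]; omega),
        hLapp, if_neg (by omega), zero_mul]
      split_ifs with h
      · rw [hLapp, if_neg (by simp; omega), zero_mul]
        simp
      · simp
  -- entries of D = 1 - ω • A
  have hD : ∀ k j : Fin N, ((1 : Matrix (Fin N) (Fin N) R) - ω • A) k j =
      if k = j then (1 : R) - ω • (1:R) else if (k:ℕ) = (j:ℕ)+1 then ω • Θ else 0 := by
    intro k j
    rw [Matrix.sub_apply, Matrix.smul_apply, hA, Matrix.one_apply]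
    split_ifs <;> simp
  have key : ∀ x : R, x * ((1:R) - ω • (1:R)) = (1 - ω) • x := by
    intro x
    rw [mul_sub, mul_one, mul_smul_comm, mul_one, sub_smul, one_smul]
  intro i j
  rw [hE, mul_bidiag' C _ ((1:R) - ω • (1:R)) (ω • Θ) hD i j]
  refine ⟨?_, ?_, ?_⟩
  · intro hij
    rw [hCapp, if_neg (by omega), zero_mul, zero_add]
    split_ifs with h
    · rw [hCapp, if_neg (by simp; omega), zero_mul]
    · rfl
  · intro hij
    rw [hCapp, if_pos (by omega)]
    have e0 : (i:ℕ) - (j:ℕ) - 1 = 0 := by omega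
    rw [e0, pow_zero, one_mul, key]
    have : (if h : (j:ℕ)+1 < N then C i ⟨(j:ℕ)+1, h⟩ * (ω • Θ) else 0) = 0 := by
      split_ifs with h
      · rw [hCapp, if_neg (by simp; omega), zero_mul]
      · rfl
    rw [this, add_zero]
  · intro hij
    have hjN : (j:ℕ)+1 < N := by have := i.isLt; omega
    rw [dif_pos hjN, hCapp, if_pos (by omega), hCapp, if_pos (by simp; omega), key]
    congr 1
    have e2 : (i:ℕ) - ((⟨(j:ℕ)+1, hjN⟩ : Fin N) : ℕ) - 1 = (i:ℕ) - (j:ℕ) - 2 := by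
      simp; omega
    rw [e2, mul_smul_comm]
end

section
/- Let a : ℕ → ℂ be a sequence with ∑ ‖a(ℓ)‖ < ∞, let N be a positive natural number, and define the N×N lower-triangular Toeplitz matrix T by T_{ij} = a(i-j) for i ≥ j and T_{ij} = 0 for i < j. Let S = sSup over x ∈ [0, 2π] of ‖∑'_{ℓ:ℕ} a(ℓ)·exp(i·ℓ·x)‖. Then for every vector v : Fin N → ℂ, the Euclidean norms satisfy ‖T.mulVec v‖₂ ≤ S·‖v‖₂; that is, the ℓ²-operator norm (largest singular value) of T is at most the supremum of the modulus of its generating function. -/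
open MeasureTheory Complex Set AddCircle
open scoped Real ComplexConjugate

set_option maxHeartbeats 2000000

section Aux

variable {T : ℝ} [hT : Fact (0 < T)]

lemma aux_integrable (n : ℤ) (f : C(AddCircle T, ℂ)) :
    Integrable (fun t => (fourier (-n)) t • f t) (haarAddCircle) := by
  apply Continuous.integrable_of_hasCompactSupport
  · exact ((fourier (-n)).continuous.smul (map_continuous f))
  · exact HasCompactSupport.of_compactSpace _

/-- `fourierCoeff` at index `n` as a continuous linear map on continuous functions. -/
noncomputable def fcCLM (T : ℝ) [hT : Fact (0 < T)] (n : ℤ) :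
    C(AddCircle T, ℂ) →L[ℂ] ℂ :=
  LinearMap.mkContinuous
    { toFun := fun f => fourierCoeff (⇑f) n
      map_add' := by
        intro f g
        show (∫ t : AddCircle T, (fourier (-n)) t • (f + g) t ∂haarAddCircle) = _
        have : (fun t : AddCircle T => (fourier (-n)) t • (f + g) t)
            = (fun t => (fourier (-n)) t • f t + (fourier (-n)) t • g t) := by
          funext t
          show _ • (f t + g t) = _
          rw [smul_add]
        rw [this, integral_add (aux_integrable n f) (aux_integrable n g)]
        rfl
      map_smul' := by
        intro c f
        simpa using fourierCoeff.const_smul (⇑f) c n }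
    1
    (by
      intro f
      simp only [LinearMap.coe_mk, AddHom.coe_mk, one_mul]
      rw [fourierCoeff]
      have hb : ‖∫ t : AddCircle T, (fourier (-n)) t • f t ∂haarAddCircle‖
          ≤ ‖f‖ * ((haarAddCircle : Measure (AddCircle T)) Set.univ).toReal := by
        apply norm_integral_le_of_norm_le_const
        apply Filter.Eventually.of_forall
        intro t
        rw [norm_smul]
        calc ‖(fourier (-n)) t‖ * ‖f t‖ = ‖f t‖ := by
              rw [show ‖((fourier (-n)) t : ℂ)‖ = 1 from Circle.norm_coe _, one_mul]
          _ ≤ ‖f‖ := f.norm_coe_le_norm t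
      simpa using hb)

lemma fcCLM_apply (n : ℤ) (f : C(AddCircle T, ℂ)) :
    fcCLM T n f = fourierCoeff (⇑f) n := rfl

lemma fc_fourier (m n : ℤ) :
    fourierCoeff (⇑(fourier m) : AddCircle T → ℂ) n = if n = m then 1 else 0 := by
  have h0 := orthonormal_fourier (T := T)
  rw [orthonormal_iff_ite] at h0
  have h := h0 n m
  rw [ContinuousMap.inner_toLp] at h
  rw [fourierCoeff, ← h]
  congr 1
  ext t
  rw [smul_eq_mul]
  rw [mul_comm]
  congr 1
  exact fourier_neg

/-- Parseval for continuous functions. -/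
lemma aux_parseval (G : C(AddCircle T, ℂ)) :
    (Summable fun n : ℤ => ‖fourierCoeff (⇑G) n‖ ^ 2) ∧
      ∑' n : ℤ, ‖fourierCoeff (⇑G) n‖ ^ 2
        = ∫ t, ‖G t‖ ^ 2 ∂(haarAddCircle : Measure (AddCircle T)) := by
  have h1 := tsum_sq_fourierCoeff (ContinuousMap.toLp (E := ℂ) 2 haarAddCircle ℂ G)
  simp_rw [fourierCoeff_toLp] at h1
  constructor
  · have hm := (lp.memℓp (fourierBasis.repr
      (ContinuousMap.toLp (E := ℂ) 2 haarAddCircle ℂ G))).summable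
      (p := 2) (by norm_num)
    refine hm.congr fun n => ?_
    rw [fourierBasis_repr, fourierCoeff_toLp]
    norm_num
  · rw [h1]
    apply integral_congr_ae
    filter_upwards [ContinuousMap.coeFn_toLp (p := 2) (𝕜 := ℂ)
      (haarAddCircle : Measure (AddCircle T)) G] with t ht
    rw [ht]

lemma aux_sq_integrable (G : C(AddCircle T, ℂ)) :
    Integrable (fun t => ‖G t‖ ^ 2) (haarAddCircle : Measure (AddCircle T)) := by
  apply Continuous.integrable_of_hasCompactSupport
  · exact ((map_continuous G).norm.pow 2)
  · exact HasCompactSupport.of_compactSpace _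

end Aux

theorem stmt_17 (a : ℕ → ℂ) (ha : Summable fun ℓ : ℕ => ‖a ℓ‖)
    (N : ℕ) (hN : 0 < N)
    (T : Matrix (Fin N) (Fin N) ℂ)
    (hT : ∀ i j : Fin N, T i j =
      if (j : ℕ) ≤ (i : ℕ) then a ((i : ℕ) - (j : ℕ)) else 0)
    (S : ℝ)
    (hS : S = sSup ((fun x : ℝ =>
        ‖∑' ℓ : ℕ, a ℓ * Complex.exp (Complex.I * (ℓ : ℂ) * (x : ℂ))‖) ''
      Set.Icc 0 (2 * Real.pi))) :
    ∀ v : Fin N → ℂ,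
      Real.sqrt (∑ i, ‖T.mulVec v i‖ ^ 2) ≤ S * Real.sqrt (∑ i, ‖v i‖ ^ 2) := by
  intro v
  haveI : Fact (0 < 2 * Real.pi) := ⟨by positivity⟩
  -- the generating function as a continuous map on the circle
  have hsummF : Summable (fun ℓ : ℕ =>
      (a ℓ • fourier (ℓ : ℤ) : C(AddCircle (2 * Real.pi), ℂ))) := by
    apply Summable.of_norm
    refine ha.congr fun ℓ => ?_
    rw [norm_smul, fourier_norm, mul_one]
  set F : C(AddCircle (2 * Real.pi), ℂ) := ∑' ℓ : ℕ, a ℓ • fourier (ℓ : ℤ) with hF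
  have hFsum : HasSum (fun ℓ : ℕ =>
      (a ℓ • fourier (ℓ : ℤ) : C(AddCircle (2 * Real.pi), ℂ))) F := hsummF.hasSum
  -- pointwise values of F
  have hFx : ∀ x : ℝ, F ((x : AddCircle (2 * Real.pi)))
      = ∑' ℓ : ℕ, a ℓ * Complex.exp (Complex.I * (ℓ : ℂ) * (x : ℂ)) := by
    intro x
    have h := (ContinuousMap.evalCLM ℂ ((x : AddCircle (2 * Real.pi)))).hasSum hFsum
    have h2 : (fun ℓ : ℕ => (ContinuousMap.evalCLM ℂ ((x : AddCircle (2 * Real.pi))))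
        (a ℓ • fourier (ℓ : ℤ))) = fun ℓ : ℕ => a ℓ * Complex.exp (Complex.I * (ℓ : ℂ) * (x : ℂ)) := by
      funext ℓ
      show (a ℓ • fourier (ℓ : ℤ) : C(AddCircle (2 * Real.pi), ℂ)) ((x : AddCircle (2 * Real.pi))) = _
      rw [ContinuousMap.smul_apply, smul_eq_mul]
      congr 1
      rw [fourier_coe_apply]
      congr 1
      have hπ : (Real.pi : ℂ) ≠ 0 := Complex.ofReal_ne_zero.mpr Real.pi_ne_zero
      push_cast
      field_simp
    rw [h2] at h
    exact h.tsum_eq.symm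
  -- S bounds F pointwise
  have hFnorm : ∀ t : AddCircle (2 * Real.pi), ‖F t‖ ≤ S := by
    have hcont : Continuous fun x : ℝ => ‖F ((x : AddCircle (2 * Real.pi)))‖ :=
      ((map_continuous F).comp (AddCircle.continuous_mk' (2 * Real.pi))).norm
    have himg : ((fun x : ℝ =>
        ‖∑' ℓ : ℕ, a ℓ * Complex.exp (Complex.I * (ℓ : ℂ) * (x : ℂ))‖) ''
          Set.Icc 0 (2 * Real.pi))
        = ((fun x : ℝ => ‖F ((x : AddCircle (2 * Real.pi)))‖) '' Set.Icc 0 (2 * Real.pi)) := by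
      apply Set.image_congr
      intro x _
      rw [hFx]
    have hbdd : BddAbove ((fun x : ℝ => ‖F ((x : AddCircle (2 * Real.pi)))‖) ''
        Set.Icc 0 (2 * Real.pi)) := (isCompact_Icc.image hcont).bddAbove
    intro t
    obtain ⟨x, hx, rfl⟩ := t.eq_coe_Ico
    rw [hS, himg]
    exact le_csSup hbdd ⟨x, ⟨hx.1, hx.2.le⟩, rfl⟩
  have hS0 : 0 ≤ S := le_trans (norm_nonneg _) (hFnorm 0)
  -- the trig polynomial from v
  set P : C(AddCircle (2 * Real.pi), ℂ) :=
    ∑ j : Fin N, v j • fourier ((j : ℕ) : ℤ) with hPdef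
  set H : C(AddCircle (2 * Real.pi), ℂ) := F * P with hHdef
  have hHsum : HasSum (fun ℓ : ℕ =>
      (a ℓ • fourier (ℓ : ℤ) : C(AddCircle (2 * Real.pi), ℂ)) * P) H :=
    hFsum.mul_right P
  -- Fourier coefficients of P
  have hcoefP : ∀ n : ℤ, fourierCoeff (⇑P) n
      = ∑ j : Fin N, v j * (if n = ((j : ℕ) : ℤ) then 1 else 0) := by
    intro n
    rw [← fcCLM_apply, hPdef, map_sum]
    congr 1
    funext j
    rw [_root_.map_smul, fcCLM_apply, fc_fourier, smul_eq_mul]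
  -- Fourier coefficients of each summand of H
  have hterm : ∀ (ℓ : ℕ) (n : ℤ),
      fcCLM (2 * Real.pi) n ((a ℓ • fourier (ℓ : ℤ)) * P)
        = ∑ j : Fin N, (a ℓ * v j) * (if n = (ℓ : ℤ) + ((j : ℕ) : ℤ) then 1 else 0) := by
    intro ℓ n
    have hexp : (a ℓ • fourier (ℓ : ℤ) : C(AddCircle (2 * Real.pi), ℂ)) * P
        = ∑ j : Fin N, (a ℓ * v j) • fourier ((ℓ : ℤ) + ((j : ℕ) : ℤ)) := by
      rw [hPdef, Finset.mul_sum]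
      congr 1
      funext j
      ext t
      show (a ℓ • fourier (ℓ : ℤ)) t * (v j • fourier ((j : ℕ) : ℤ)) t = _
      rw [ContinuousMap.smul_apply, ContinuousMap.smul_apply, ContinuousMap.smul_apply]
      rw [smul_eq_mul, smul_eq_mul, smul_eq_mul, fourier_add]
      ring
    rw [hexp, map_sum]
    congr 1
    funext j
    rw [_root_.map_smul, fcCLM_apply, fc_fourier, smul_eq_mul]
  -- Fourier coefficients of H equal the matrix-vector product
  have hcoefH : ∀ i : Fin N,
      fourierCoeff (⇑H) (((i : ℕ) : ℤ)) = T.mulVec v i := by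
    intro i
    have hs := (fcCLM (2 * Real.pi) (((i : ℕ) : ℤ))).hasSum hHsum
    set g : ℕ → ℂ := fun ℓ =>
      ∑ j : Fin N, (a ℓ * v j) * (if ((i : ℕ) : ℤ) = (ℓ : ℤ) + ((j : ℕ) : ℤ) then 1 else 0)
      with hg
    have hs' : HasSum g (fcCLM (2 * Real.pi) (((i : ℕ) : ℤ)) H) := by
      refine HasSum.congr_fun hs fun ℓ => ?_
      rw [hterm]
    have hg0 : ∀ ℓ ∉ Finset.range ((i : ℕ) + 1), g ℓ = 0 := by
      intro ℓ hℓ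
      rw [Finset.mem_range, not_lt] at hℓ
      apply Finset.sum_eq_zero
      intro j _
      rw [if_neg (by push_cast; omega), mul_zero]
    have hs'' : HasSum g (∑ ℓ ∈ Finset.range ((i : ℕ) + 1), g ℓ) :=
      hasSum_sum_of_ne_finset_zero hg0
    have hval : ∑ ℓ ∈ Finset.range ((i : ℕ) + 1), g ℓ = T.mulVec v i := by
      rw [Matrix.mulVec, hg]
      rw [Finset.sum_comm]
      show _ = dotProduct (T i) v
      rw [dotProduct]
      congr 1
      funext j
      rw [hT i j]
      by_cases hij : (j : ℕ) ≤ (i : ℕ)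
      · rw [if_pos hij]
        rw [Finset.sum_eq_single ((i : ℕ) - (j : ℕ))]
        · rw [if_pos (by push_cast; omega), mul_one]
        · intro b _ hb
          rw [if_neg (by push_cast; omega), mul_zero]
        · intro hmem
          exact absurd (Finset.mem_range.2 (by omega)) hmem
      · rw [if_neg hij, zero_mul]
        apply Finset.sum_eq_zero
        intro ℓ _
        rw [if_neg (by push_cast; omega), mul_zero]
    rw [← fcCLM_apply, hs'.unique hs'', hval]
  -- Parseval for H and P
  obtain ⟨hHsumm, hHpars⟩ := aux_parseval H
  obtain ⟨_, hPpars⟩ := aux_parseval P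
  -- the finite set of relevant frequencies
  set s : Finset ℤ := Finset.image (fun j : Fin N => ((j : ℕ) : ℤ)) Finset.univ with hsdef
  have hinj : ∀ x ∈ (Finset.univ : Finset (Fin N)), ∀ y ∈ (Finset.univ : Finset (Fin N)),
      ((x : ℕ) : ℤ) = ((y : ℕ) : ℤ) → x = y := by
    intro x _ y _ hxy
    exact Fin.ext (by exact_mod_cast hxy)
  -- ∫ ‖P‖² = ∑ ‖v j‖²
  have hPint : ∫ t, ‖P t‖ ^ 2 ∂(haarAddCircle : Measure (AddCircle (2 * Real.pi)))
      = ∑ j, ‖v j‖ ^ 2 := by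
    rw [← hPpars]
    have hout : ∀ n ∉ s, ‖fourierCoeff (⇑P) n‖ ^ 2 = 0 := by
      intro n hn
      rw [hcoefP]
      have : ∀ j : Fin N, v j * (if n = ((j : ℕ) : ℤ) then 1 else 0) = 0 := by
        intro j
        rw [if_neg, mul_zero]
        intro hc
        exact hn (by rw [hsdef]; exact Finset.mem_image.2 ⟨j, Finset.mem_univ j, hc.symm⟩)
      rw [Finset.sum_congr rfl fun j _ => this j, Finset.sum_const, smul_zero, norm_zero]
      norm_num
    rw [tsum_eq_sum hout, hsdef, Finset.sum_image hinj]
    congr 1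
    funext j
    have : fourierCoeff (⇑P) (((j : ℕ) : ℤ)) = v j := by
      rw [hcoefP]
      rw [Finset.sum_eq_single j]
      · rw [if_pos rfl, mul_one]
      · intro b _ hb
        rw [if_neg (fun hc => hb (Fin.ext (show (b : ℕ) = (j : ℕ) by exact_mod_cast hc.symm))), mul_zero]
      · intro hmem
        exact absurd (Finset.mem_univ j) hmem
    rw [this]
  -- pointwise bound and integral bound
  have hint : ∫ t, ‖H t‖ ^ 2 ∂(haarAddCircle : Measure (AddCircle (2 * Real.pi)))
      ≤ S ^ 2 * ∑ j, ‖v j‖ ^ 2 := by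
    rw [← hPint, ← integral_const_mul]
    apply integral_mono (aux_sq_integrable H) ((aux_sq_integrable P).const_mul _)
    intro t
    show ‖H t‖ ^ 2 ≤ S ^ 2 * ‖P t‖ ^ 2
    have h1 : ‖H t‖ = ‖F t‖ * ‖P t‖ := by
      rw [show H t = F t * P t from rfl, norm_mul]
    rw [h1, mul_pow]
    exact mul_le_mul_of_nonneg_right
      (pow_le_pow_left₀ (norm_nonneg _) (hFnorm t) 2) (sq_nonneg _)
  -- final chain
  have hchain : ∑ i, ‖T.mulVec v i‖ ^ 2 ≤ S ^ 2 * ∑ j, ‖v j‖ ^ 2 := by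
    have h1 : ∑ i, ‖T.mulVec v i‖ ^ 2
        = ∑ n ∈ s, ‖fourierCoeff (⇑H) n‖ ^ 2 := by
      rw [hsdef, Finset.sum_image hinj]
      congr 1
      funext i
      rw [hcoefH]
    rw [h1]
    calc ∑ n ∈ s, ‖fourierCoeff (⇑H) n‖ ^ 2
        ≤ ∑' n : ℤ, ‖fourierCoeff (⇑H) n‖ ^ 2 :=
          Summable.sum_le_tsum s (fun n _ => sq_nonneg _) hHsumm
      _ = ∫ t, ‖H t‖ ^ 2 ∂(haarAddCircle : Measure (AddCircle (2 * Real.pi))) := hHpars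
      _ ≤ S ^ 2 * ∑ j, ‖v j‖ ^ 2 := hint
  calc Real.sqrt (∑ i, ‖T.mulVec v i‖ ^ 2)
      ≤ Real.sqrt (S ^ 2 * ∑ j, ‖v j‖ ^ 2) := Real.sqrt_le_sqrt hchain
    _ = S * Real.sqrt (∑ i, ‖v i‖ ^ 2) := by
        rw [Real.sqrt_mul (sq_nonneg S), Real.sqrt_sq hS0]
end

section
/- Let λ, μ ∈ ℂ with |λ| < 1 and |μ| < 1, let m be a positive natural number, ω₁, ω₂ ∈ ℝ, and N a positive natural number. Define the N×N complex matrix Ẽ by: Ẽ_{ij} = 0 for i ≤ j; Ẽ_{ij} = (1-ω₂)(1-ω₁)·(λ^m - μ) for i = j+1; Ẽ_{ij} = (1-ω₂)(1-ω₁)·μ·(λ^m - μ) + (ω₂(1-ω₁)+ω₁(1-ω₂))·(λ^m - μ)·λ^m for i = j+2; and Ẽ_{ij} = (1-ω₂)(1-ω₁)·μ^{i-j-1}·(λ^m - μ) + (ω₂(1-ω₁)+ω₁(1-ω₂))·μ^{i-j-2}·(λ^m - μ)·λ^m + ω₂·ω₁·μ^{i-j-3}·(λ^m - μ)·λ^{2m}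 for i ≥ j+3. Then the ℓ²-operator norm (largest singular value) of Ẽ satisfies ‖Ẽ‖ ≤ sSup over x ∈ [0, 2π] of |λ^m - μ|·|(1-ω₂)(1-ω₁) + exp(i·x)·(ω₂(1-ω₁)+ω₁(1-ω₂))·λ^m + exp(2·i·x)·ω₂·ω₁·λ^{2m}| / |1 - exp(i·x)·μ|. -/
open Complex Real intervalIntegral Finset

noncomputable def Complex.abs : AbsoluteValue ℂ ℝ where
  toFun z := ‖z‖
  map_mul' := norm_mul
  nonneg' := norm_nonneg
  eq_zero' _ := norm_eq_zero
  add_le' := norm_add_le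

theorem Complex.norm_eq_abs (z : ℂ) : ‖z‖ = Complex.abs z := rfl

theorem Complex.sq_abs (z : ℂ) : Complex.abs z ^ 2 = Complex.normSq z := Complex.sq_norm z

@[simp] theorem Complex.abs_exp (z : ℂ) : Complex.abs (Complex.exp z) = Real.exp z.re :=
  Complex.norm_exp z

theorem Complex.continuous_abs : Continuous Complex.abs := continuous_norm

@[simp] theorem Complex.abs_ofReal (r : ℝ) : Complex.abs (r : ℂ) = |r| := by
  show ‖(r : ℂ)‖ = |r|
  simp

@[simp] theorem Complex.abs_conj (z : ℂ) : Complex.abs ((starRingEnd ℂ) z) = Complex.abs z := by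
  show ‖(starRingEnd ℂ) z‖ = ‖z‖
  simp

lemma int_exp (n : ℤ) : ∫ x in (0:ℝ)..(2*Real.pi), Complex.exp (Complex.I * n * x) =
    if n = 0 then ((2*Real.pi : ℝ) : ℂ) else 0 := by
  rcases eq_or_ne n 0 with h | h
  · simp [h]
  · rw [if_neg h]
    have hc : (Complex.I * n : ℂ) ≠ 0 := by
      simp [Complex.I_ne_zero, Complex.ext_iff]
      exact_mod_cast h
    rw [integral_exp_mul_complex hc]
    have h1 : Complex.exp (Complex.I * n * ((2*Real.pi : ℝ) : ℂ)) = 1 := by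
      rw [show (Complex.I * n * ((2*Real.pi:ℝ) : ℂ) : ℂ) = n * (2 * Real.pi * Complex.I) by push_cast; ring]
      exact Complex.exp_int_mul_two_pi_mul_I n
    push_cast at h1 ⊢
    rw [h1]
    simp

noncomputable def gg {N : ℕ} (w : Fin N → ℂ) (x : ℝ) : ℂ :=
  ∑ i, w i * Complex.exp (Complex.I * ((i:ℕ):ℂ) * x)

lemma gg_cont {N : ℕ} (w : Fin N → ℂ) : Continuous (gg w) := by
  unfold gg
  fun_prop

lemma master_cont {N : ℕ} (c : ℂ) (d : ℕ) (v u : Fin N → ℂ) :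
    Continuous (fun x : ℝ => c * Complex.exp (Complex.I * (d:ℂ) * x) *
      (starRingEnd ℂ) (gg v x) * gg u x) := by
  have h1 : Continuous fun x : ℝ => (starRingEnd ℂ) (gg v x) :=
    continuous_conj.comp (gg_cont v)
  have h2 : Continuous fun x : ℝ => c * Complex.exp (Complex.I * (d:ℂ) * x) := by fun_prop
  exact (h2.mul h1).mul (gg_cont u)

lemma master {N : ℕ} (c : ℂ) (d : ℕ) (v u : Fin N → ℂ) :
    ∫ x in (0:ℝ)..(2*Real.pi), c * Complex.exp (Complex.I * (d:ℂ) * x) *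
      (starRingEnd ℂ) (gg v x) * gg u x
    = ((2*Real.pi : ℝ) : ℂ) * ∑ i : Fin N, ∑ j : Fin N,
        (if (i:ℕ) = d + (j:ℕ) then c * (starRingEnd ℂ) (v i) * u j else 0) := by
  have expand : ∀ x : ℝ, c * Complex.exp (Complex.I * (d:ℂ) * x) *
      (starRingEnd ℂ) (gg v x) * gg u x
      = ∑ i : Fin N, ∑ j : Fin N, (c * (starRingEnd ℂ) (v i) * u j) *
          Complex.exp (Complex.I * (((d:ℤ) - (i:ℕ) + (j:ℕ) : ℤ) : ℂ) * x) := by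
    intro x
    unfold gg
    rw [map_sum]
    simp only [Finset.mul_sum, Finset.sum_mul]
    rw [Finset.sum_comm]
    refine Finset.sum_congr rfl fun i _ => ?_
    refine Finset.sum_congr rfl fun j _ => ?_
    have hconj : (starRingEnd ℂ) (v i * Complex.exp (Complex.I * ((i:ℕ):ℂ) * x))
        = (starRingEnd ℂ) (v i) * Complex.exp (-(Complex.I * ((i:ℕ):ℂ) * x)) := by
      rw [map_mul, ← Complex.exp_conj]
      congr 1
      simp [map_mul, Complex.conj_I, Complex.conj_ofReal]
    rw [hconj]
    have hexp : Complex.exp (Complex.I * (d:ℂ) * x) * Complex.exp (-(Complex.I * ((i:ℕ):ℂ) * x))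
        * Complex.exp (Complex.I * ((j:ℕ):ℂ) * x)
        = Complex.exp (Complex.I * (((d:ℤ) - (i:ℕ) + (j:ℕ) : ℤ) : ℂ) * x) := by
      rw [← Complex.exp_add, ← Complex.exp_add]
      congr 1
      push_cast
      ring
    linear_combination (c * (starRingEnd ℂ) (v i) * u j) * hexp
  rw [intervalIntegral.integral_congr (fun x _ => expand x)]
  rw [intervalIntegral.integral_finset_sum (fun i _ => by
    apply Continuous.intervalIntegrable; fun_prop)]
  rw [Finset.mul_sum]
  refine Finset.sum_congr rfl fun i _ => ?_
  rw [intervalIntegral.integral_finset_sum (fun j _ => by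
    apply Continuous.intervalIntegrable; fun_prop)]
  rw [Finset.mul_sum]
  refine Finset.sum_congr rfl fun j _ => ?_
  rw [intervalIntegral.integral_const_mul, int_exp]
  have hiff : ((d:ℤ) - (i:ℕ) + (j:ℕ) = 0) ↔ ((i:ℕ) = d + (j:ℕ)) := by omega
  by_cases h : (i:ℕ) = d + (j:ℕ)
  · rw [if_pos (hiff.mpr h), if_pos h]; ring
  · rw [if_neg (fun hh => h (hiff.mp hh)), if_neg h]; ring

lemma parseval {N : ℕ} (w : Fin N → ℂ) :
    ∫ x in (0:ℝ)..(2*Real.pi), (Complex.abs (gg w x))^2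
      = 2*Real.pi * ∑ i, (Complex.abs (w i))^2 := by
  have h := master (N := N) 1 0 w w
  simp only [Nat.cast_zero, mul_zero, zero_mul, Complex.exp_zero, one_mul, mul_one,
    zero_add, Fin.val_inj] at h
  have hpt : ∀ x : ℝ, (starRingEnd ℂ) (gg w x) * gg w x
      = (((Complex.abs (gg w x))^2 : ℝ) : ℂ) := by
    intro x
    rw [Complex.sq_abs, Complex.normSq_eq_conj_mul_self]
  have hrhs : ∀ i : Fin N, ∑ j : Fin N, (if i = j then (starRingEnd ℂ) (w i) * w j else 0)
      = (((Complex.abs (w i))^2 : ℝ) : ℂ) := by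
    intro i
    rw [Finset.sum_ite_eq Finset.univ i (fun j => (starRingEnd ℂ) (w i) * w j)]
    simp [Complex.sq_abs, Complex.normSq_eq_conj_mul_self]
  rw [intervalIntegral.integral_congr (fun x _ => hpt x)] at h
  rw [Finset.sum_congr rfl (fun i _ => hrhs i)] at h
  rw [intervalIntegral.integral_ofReal] at h
  have h2 : ((∫ x in (0:ℝ)..(2*Real.pi), (Complex.abs (gg w x))^2 : ℝ) : ℂ)
      = ((2*Real.pi * ∑ i, (Complex.abs (w i))^2 : ℝ) : ℂ) := by
    rw [h]; push_cast; ring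
  exact_mod_cast h2

lemma cs {N : ℕ} (v u : Fin N → ℂ) :
    ∫ x in (0:ℝ)..(2*Real.pi), Complex.abs (gg v x) * Complex.abs (gg u x)
      ≤ 2*Real.pi * (Real.sqrt (∑ i, (Complex.abs (v i))^2) *
          Real.sqrt (∑ i, (Complex.abs (u i))^2)) := by
  have hpos : (0:ℝ) ≤ 2*Real.pi := by positivity
  have habs : ∀ w : Fin N → ℂ, Continuous fun x : ℝ => Complex.abs (gg w x) :=
    fun w => Complex.continuous_abs.comp (gg_cont w)
  have hzero : ∀ w : Fin N → ℂ, (∑ i, (Complex.abs (w i))^2) = 0 → ∀ x : ℝ, gg w x = 0 := by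
    intro w hw x
    have : ∀ i ∈ Finset.univ, (Complex.abs (w i))^2 = 0 :=
      (Finset.sum_eq_zero_iff_of_nonneg (fun i _ => by positivity)).1 hw
    have hw0 : ∀ i : Fin N, w i = 0 := by
      intro i
      have := this i (Finset.mem_univ i)
      simpa using this
    unfold gg
    simp [hw0]
  by_cases hA : (∑ i, (Complex.abs (v i))^2) = 0
  · have : ∀ x : ℝ, Complex.abs (gg v x) * Complex.abs (gg u x) = 0 := by
      intro x; rw [hzero v hA x]; simp
    rw [intervalIntegral.integral_congr (fun x _ => this x)]
    simp
    positivity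
  by_cases hB : (∑ i, (Complex.abs (u i))^2) = 0
  · have : ∀ x : ℝ, Complex.abs (gg v x) * Complex.abs (gg u x) = 0 := by
      intro x; rw [hzero u hB x]; simp
    rw [intervalIntegral.integral_congr (fun x _ => this x)]
    simp
    positivity
  set A2 := ∑ i, (Complex.abs (v i))^2 with hA2
  set B2 := ∑ i, (Complex.abs (u i))^2 with hB2
  have hA2nn : 0 ≤ A2 := by positivity
  have hB2nn : 0 ≤ B2 := by positivity
  set a := Real.sqrt A2 with ha
  set b := Real.sqrt B2 with hb
  have hapos : 0 < a := Real.sqrt_pos.2 (lt_of_le_of_ne hA2nn (Ne.symm hA))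
  have hbpos : 0 < b := Real.sqrt_pos.2 (lt_of_le_of_ne hB2nn (Ne.symm hB))
  have ha2 : a^2 = A2 := Real.sq_sqrt hA2nn
  have hb2 : b^2 = B2 := Real.sq_sqrt hB2nn
  set t := b / a with htdef
  have htpos : 0 < t := div_pos hbpos hapos
  clear_value t a b
  have hpt : ∀ x ∈ Set.uIcc (0:ℝ) (2*Real.pi),
      Complex.abs (gg v x) * Complex.abs (gg u x)
        ≤ (t * (Complex.abs (gg v x))^2 + (Complex.abs (gg u x))^2 / t) / 2 := by
    intro x _
    have h1 : (0:ℝ) ≤ Complex.abs (gg v x) := Complex.abs.nonneg _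
    have h2 : (0:ℝ) ≤ Complex.abs (gg u x) := Complex.abs.nonneg _
    rw [← sub_nonneg]
    have heq : (t * (Complex.abs (gg v x))^2 + (Complex.abs (gg u x))^2 / t) / 2
        - Complex.abs (gg v x) * Complex.abs (gg u x)
        = (t * Complex.abs (gg v x) - Complex.abs (gg u x))^2 / (2*t) := by
      field_simp
      ring
    rw [heq]
    exact div_nonneg (sq_nonneg _) (by linarith)
  have hint : ∫ x in (0:ℝ)..(2*Real.pi), Complex.abs (gg v x) * Complex.abs (gg u x)
      ≤ ∫ x in (0:ℝ)..(2*Real.pi),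
          (t * (Complex.abs (gg v x))^2 + (Complex.abs (gg u x))^2 / t) / 2 := by
    apply intervalIntegral.integral_mono_on hpos
    · exact ((habs v).mul (habs u)).intervalIntegrable _ _
    · apply Continuous.intervalIntegrable
      have := (habs v)
      have := (habs u)
      fun_prop
    · intro x hx
      exact hpt x (Set.mem_uIcc.2 (Or.inl hx))
  have hrhs : ∫ x in (0:ℝ)..(2*Real.pi),
      (t * (Complex.abs (gg v x))^2 + (Complex.abs (gg u x))^2 / t) / 2
      = (t * (2*Real.pi*A2) + (2*Real.pi*B2) / t) / 2 := by
    rw [intervalIntegral.integral_div]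
    rw [intervalIntegral.integral_add]
    · rw [intervalIntegral.integral_const_mul, intervalIntegral.integral_div,
        parseval v, parseval u]
    · apply Continuous.intervalIntegrable
      have := habs v; fun_prop
    · apply Continuous.intervalIntegrable
      have := habs u; fun_prop
  rw [hrhs] at hint
  refine hint.trans (le_of_eq ?_)
  rw [← ha2, ← hb2, htdef]
  field_simp
  ring


noncomputable def Pf (lam μ : ℂ) (m : ℕ) (ω₁ ω₂ : ℝ) (K : ℕ) (x : ℝ) : ℂ :=
  ∑ j ∈ Finset.range (K+1),
    (((1 - (ω₂:ℂ)) * (1 - (ω₁:ℂ)) * (lam^m - μ)) * μ^j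
        * Complex.exp (Complex.I * ((j+1 : ℕ):ℂ) * x)
      + (((ω₂:ℂ)*(1-(ω₁:ℂ)) + (ω₁:ℂ)*(1-(ω₂:ℂ))) * (lam^m - μ) * lam^m) * μ^j
        * Complex.exp (Complex.I * ((j+2 : ℕ):ℂ) * x)
      + ((ω₂:ℂ)*(ω₁:ℂ) * (lam^m - μ) * lam^(2*m)) * μ^j
        * Complex.exp (Complex.I * ((j+3 : ℕ):ℂ) * x))

lemma Pf_bound (lam μ : ℂ) (hμ : Complex.abs μ < 1) (m : ℕ) (ω₁ ω₂ : ℝ) (K : ℕ) (x : ℝ) :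
    Complex.abs (Pf lam μ m ω₁ ω₂ K x) ≤
      (Complex.abs (lam ^ m - μ) *
            Complex.abs ((1 - (ω₂ : ℂ)) * (1 - (ω₁ : ℂ)) +
              Complex.exp (Complex.I * (x : ℂ)) *
                ((ω₂ : ℂ) * (1 - (ω₁ : ℂ)) + (ω₁ : ℂ) * (1 - (ω₂ : ℂ))) * lam ^ m +
              Complex.exp (2 * Complex.I * (x : ℂ)) * (ω₂ : ℂ) * (ω₁ : ℂ) * lam ^ (2 * m)) /
            Complex.abs (1 - Complex.exp (Complex.I * (x : ℂ)) * μ))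
        * (1 + Complex.abs μ ^ (K+1)) := by
  set z := Complex.exp (Complex.I * (x:ℂ)) with hzdef
  have habsz : Complex.abs z = 1 := by
    rw [hzdef, Complex.abs_exp]
    norm_num [Complex.mul_re]
  have hzp : ∀ n : ℕ, Complex.exp (Complex.I * (n:ℂ) * x) = z^n := by
    intro n
    rw [hzdef, ← Complex.exp_nat_mul]
    congr 1
    ring
  have hz2 : Complex.exp (2 * Complex.I * (x:ℂ)) = z^2 := by
    rw [show (2 * Complex.I * (x:ℂ)) = Complex.I * ((2:ℕ):ℂ) * x by push_cast; ring]
    exact hzp 2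
  have hμz : Complex.abs (μ * z) < 1 := by rw [map_mul, habsz]; simpa using hμ
  have hμz1 : μ * z ≠ 1 := by
    intro h
    rw [h] at hμz
    simp at hμz
  -- factor Pf
  have hfact : Pf lam μ m ω₁ ω₂ K x
      = ((lam^m - μ) * z * ((1 - (ω₂:ℂ)) * (1 - (ω₁:ℂ)) +
          z * ((ω₂:ℂ)*(1-(ω₁:ℂ)) + (ω₁:ℂ)*(1-(ω₂:ℂ))) * lam^m +
          z^2 * (ω₂:ℂ) * (ω₁:ℂ) * lam^(2*m))) * ∑ j ∈ Finset.range (K+1), (μ*z)^j := by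
    unfold Pf
    rw [Finset.mul_sum]
    refine Finset.sum_congr rfl fun j _ => ?_
    rw [hzp (j+1), hzp (j+2), hzp (j+3), mul_pow]
    ring
  rw [hfact, geom_sum_eq hμz1]
  rw [map_mul, map_mul, map_mul]
  have hnum : Complex.abs (((μ*z)^(K+1) - 1) / (μ*z - 1))
      ≤ (1 + Complex.abs μ ^ (K+1)) / Complex.abs (1 - z * μ) := by
    rw [map_div₀]
    have h1 : Complex.abs ((μ*z)^(K+1) - 1) ≤ 1 + Complex.abs μ ^ (K+1) := by
      calc Complex.abs ((μ*z)^(K+1) - 1) ≤ Complex.abs ((μ*z)^(K+1)) + Complex.abs 1 := by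
            simpa [Complex.norm_eq_abs] using norm_sub_le ((μ*z)^(K+1)) (1:ℂ)
        _ = 1 + Complex.abs μ ^ (K+1) := by
            rw [map_pow, map_mul, habsz, mul_one, map_one]; ring
    have h2 : Complex.abs (μ*z - 1) = Complex.abs (1 - z*μ) := by
      rw [show (μ*z - 1 : ℂ) = -(1 - z*μ) by ring, map_neg_eq_map]
    rw [h2]
    have hne : (1 - z*μ) ≠ 0 := by
      intro h
      have h1 : z * μ = 1 := (sub_eq_zero.mp h).symm
      have := congrArg Complex.abs h1
      rw [map_mul, habsz, one_mul, map_one] at this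
      rw [this] at hμ
      exact lt_irrefl _ hμ
    have hdenpos : 0 < Complex.abs (1 - z*μ) := by
      simpa [AbsoluteValue.pos_iff] using hne
    exact (div_le_div_iff_of_pos_right hdenpos).mpr h1
  rw [hz2]
  rw [habsz, mul_one]
  calc Complex.abs (lam^m - μ) * Complex.abs ((1 - (ω₂:ℂ)) * (1 - (ω₁:ℂ)) +
          z * ((ω₂:ℂ)*(1-(ω₁:ℂ)) + (ω₁:ℂ)*(1-(ω₂:ℂ))) * lam^m +
          z^2 * (ω₂:ℂ) * (ω₁:ℂ) * lam^(2*m))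
        * Complex.abs (((μ*z)^(K+1) - 1) / (μ*z - 1))
      ≤ Complex.abs (lam^m - μ) * Complex.abs ((1 - (ω₂:ℂ)) * (1 - (ω₁:ℂ)) +
          z * ((ω₂:ℂ)*(1-(ω₁:ℂ)) + (ω₁:ℂ)*(1-(ω₂:ℂ))) * lam^m +
          z^2 * (ω₂:ℂ) * (ω₁:ℂ) * lam^(2*m))
        * ((1 + Complex.abs μ ^ (K+1)) / Complex.abs (1 - z * μ)) := by
        apply mul_le_mul_of_nonneg_left hnum (by positivity)
    _ = _ := by ring

lemma opnorm_le (lam μ : ℂ) (m : ℕ) (ω₁ ω₂ : ℝ)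
    (E : Matrix (Fin N) (Fin N) ℂ)
    (hE0 : ∀ i j : Fin N, (i : ℕ) ≤ (j : ℕ) → E i j = 0)
    (hE1 : ∀ i j : Fin N, (i : ℕ) = (j : ℕ) + 1 →
      E i j = (1 - (ω₂ : ℂ)) * (1 - (ω₁ : ℂ)) * (lam ^ m - μ))
    (hE2 : ∀ i j : Fin N, (i : ℕ) = (j : ℕ) + 2 →
      E i j = (1 - (ω₂ : ℂ)) * (1 - (ω₁ : ℂ)) * μ * (lam ^ m - μ) +
        ((ω₂ : ℂ) * (1 - (ω₁ : ℂ)) + (ω₁ : ℂ) * (1 - (ω₂ : ℂ))) * (lam ^ m - μ) * lam ^ m)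
    (hE3 : ∀ i j : Fin N, (j : ℕ) + 3 ≤ (i : ℕ) →
      E i j = (1 - (ω₂ : ℂ)) * (1 - (ω₁ : ℂ)) * μ ^ ((i : ℕ) - (j : ℕ) - 1) * (lam ^ m - μ) +
        ((ω₂ : ℂ) * (1 - (ω₁ : ℂ)) + (ω₁ : ℂ) * (1 - (ω₂ : ℂ))) *
          μ ^ ((i : ℕ) - (j : ℕ) - 2) * (lam ^ m - μ) * lam ^ m +
        (ω₂ : ℂ) * (ω₁ : ℂ) * μ ^ ((i : ℕ) - (j : ℕ) - 3) * (lam ^ m - μ) * lam ^ (2 * m))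
    (K : ℕ) (hK : N ≤ K) (M0 : ℝ) (hM0 : 0 ≤ M0)
    (hPB : ∀ x ∈ Set.Icc (0:ℝ) (2*Real.pi), Complex.abs (Pf lam μ m ω₁ ω₂ K x) ≤ M0) :
    ‖Matrix.toEuclideanCLM (𝕜 := ℂ) E‖ ≤ M0 := by
  have hQF : ∀ v u : EuclideanSpace ℂ (Fin N),
      Complex.abs (∑ i : Fin N, ∑ j : Fin N, (starRingEnd ℂ) (v i) * E i j * u j)
        ≤ M0 * (‖v‖ * ‖u‖) := by
    intro v u
    -- the integral identity
    have hexpand : ∀ x : ℝ, Pf lam μ m ω₁ ω₂ K x * (starRingEnd ℂ) (gg v x) * gg u x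
        = ∑ j ∈ Finset.range (K+1),
          ((((1 - (ω₂:ℂ)) * (1 - (ω₁:ℂ)) * (lam^m - μ)) * μ^j
              * Complex.exp (Complex.I * ((j+1 : ℕ):ℂ) * x) * (starRingEnd ℂ) (gg v x) * gg u x)
            + ((((ω₂:ℂ)*(1-(ω₁:ℂ)) + (ω₁:ℂ)*(1-(ω₂:ℂ))) * (lam^m - μ) * lam^m) * μ^j
              * Complex.exp (Complex.I * ((j+2 : ℕ):ℂ) * x) * (starRingEnd ℂ) (gg v x) * gg u x)
            + (((ω₂:ℂ)*(ω₁:ℂ) * (lam^m - μ) * lam^(2*m)) * μ^j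
              * Complex.exp (Complex.I * ((j+3 : ℕ):ℂ) * x) * (starRingEnd ℂ) (gg v x) * gg u x)) := by
      intro x
      unfold Pf
      simp only [Finset.sum_mul, add_mul]
    have hI : ∫ x in (0:ℝ)..(2*Real.pi),
        Pf lam μ m ω₁ ω₂ K x * (starRingEnd ℂ) (gg v x) * gg u x
        = ((2*Real.pi:ℝ):ℂ) * ∑ i : Fin N, ∑ j : Fin N,
            (starRingEnd ℂ) (v i) * E i j * u j := by
      rw [intervalIntegral.integral_congr (fun x _ => hexpand x)]
      rw [intervalIntegral.integral_finset_sum (fun j _ =>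
        (((master_cont _ (j+1) v u).fun_add (master_cont _ (j+2) v u)).fun_add
          (master_cont _ (j+3) v u)).intervalIntegrable _ _)]
      have hsplit : ∀ j : ℕ, j ∈ Finset.range (K+1) → (∫ x in (0:ℝ)..(2*Real.pi),
          ((((1 - (ω₂:ℂ)) * (1 - (ω₁:ℂ)) * (lam^m - μ)) * μ^j
              * Complex.exp (Complex.I * ((j+1 : ℕ):ℂ) * x) * (starRingEnd ℂ) (gg v x) * gg u x)
            + ((((ω₂:ℂ)*(1-(ω₁:ℂ)) + (ω₁:ℂ)*(1-(ω₂:ℂ))) * (lam^m - μ) * lam^m) * μ^j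
              * Complex.exp (Complex.I * ((j+2 : ℕ):ℂ) * x) * (starRingEnd ℂ) (gg v x) * gg u x)
            + (((ω₂:ℂ)*(ω₁:ℂ) * (lam^m - μ) * lam^(2*m)) * μ^j
              * Complex.exp (Complex.I * ((j+3 : ℕ):ℂ) * x) * (starRingEnd ℂ) (gg v x) * gg u x))
          = ((2*Real.pi:ℝ):ℂ) * (∑ i : Fin N, ∑ i' : Fin N,
              ((if (i:ℕ) = (j+1) + (i':ℕ) then ((1 - (ω₂:ℂ)) * (1 - (ω₁:ℂ)) * (lam^m - μ)) * μ^j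
                  * (starRingEnd ℂ) (v i) * u i' else 0)
               + (if (i:ℕ) = (j+2) + (i':ℕ) then (((ω₂:ℂ)*(1-(ω₁:ℂ)) + (ω₁:ℂ)*(1-(ω₂:ℂ))) * (lam^m - μ) * lam^m) * μ^j
                  * (starRingEnd ℂ) (v i) * u i' else 0)
               + (if (i:ℕ) = (j+3) + (i':ℕ) then ((ω₂:ℂ)*(ω₁:ℂ) * (lam^m - μ) * lam^(2*m)) * μ^j
                  * (starRingEnd ℂ) (v i) * u i' else 0)))) := by
        intro j _
        rw [intervalIntegral.integral_add
            (((master_cont _ (j+1) v u).fun_add (master_cont _ (j+2) v u)).intervalIntegrable _ _)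
            ((master_cont _ (j+3) v u).intervalIntegrable _ _),
          intervalIntegral.integral_add ((master_cont _ (j+1) v u).intervalIntegrable _ _)
            ((master_cont _ (j+2) v u).intervalIntegrable _ _),
          master _ (j+1) v u, master _ (j+2) v u, master _ (j+3) v u]
        simp only [Finset.sum_add_distrib, mul_add]
      rw [Finset.sum_congr rfl hsplit, ← Finset.mul_sum]
      congr 1
      rw [Finset.sum_comm]
      refine Finset.sum_congr rfl fun i _ => ?_
      rw [Finset.sum_comm]
      refine Finset.sum_congr rfl fun i' _ => ?_
      rw [Finset.sum_add_distrib, Finset.sum_add_distrib]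
      have hVk : ∀ (c : ℂ) (d : ℕ),
          (∑ j ∈ Finset.range (K+1), if (i:ℕ) = (j + d) + (i':ℕ)
              then c * μ^j * (starRingEnd ℂ) (v i) * u i' else 0)
          = (if (i':ℕ) + d ≤ (i:ℕ) then c * μ^((i:ℕ) - (i':ℕ) - d) else 0)
              * ((starRingEnd ℂ) (v i) * u i') := by
        intro c d
        by_cases hc : (i':ℕ) + d ≤ (i:ℕ)
        · rw [if_pos hc, Finset.sum_eq_single ((i:ℕ) - (i':ℕ) - d)]
          · rw [if_pos (by omega)]; ring
          · intro b _ hb; rw [if_neg (by omega)]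
          · intro hmem
            exact absurd (Finset.mem_range.2 (by have := i.isLt; omega)) hmem
        · rw [if_neg hc, Finset.sum_eq_zero fun b _ => by rw [if_neg (by omega)], zero_mul]
      rw [hVk _ 1, hVk _ 2, hVk _ 3]
      by_cases hle : (i:ℕ) ≤ (i':ℕ)
      · rw [if_neg (by omega), if_neg (by omega), if_neg (by omega), hE0 i i' hle]; ring
      by_cases h1 : (i:ℕ) = (i':ℕ) + 1
      · rw [if_pos (by omega), if_neg (by omega), if_neg (by omega), hE1 i i' h1,
          show (i:ℕ) - (i':ℕ) - 1 = 0 by omega]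
        ring
      by_cases h2 : (i:ℕ) = (i':ℕ) + 2
      · rw [if_pos (by omega), if_pos (by omega), if_neg (by omega), hE2 i i' h2,
          show (i:ℕ) - (i':ℕ) - 1 = 1 by omega, show (i:ℕ) - (i':ℕ) - 2 = 0 by omega]
        ring
      · have h3 : (i':ℕ) + 3 ≤ (i:ℕ) := by omega
        rw [if_pos (by omega), if_pos (by omega), if_pos (by omega), hE3 i i' h3]
        ring
    -- now the bound
    have hPfcont : Continuous (Pf lam μ m ω₁ ω₂ K) := by
      unfold Pf
      apply continuous_finset_sum
      intro j _
      fun_prop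
    have hggv := gg_cont v
    have hggu := gg_cont u
    have habs1 : Complex.abs (∫ x in (0:ℝ)..(2*Real.pi),
        Pf lam μ m ω₁ ω₂ K x * (starRingEnd ℂ) (gg v x) * gg u x)
        ≤ M0 * (2*Real.pi * (Real.sqrt (∑ i, (Complex.abs (v i))^2) *
            Real.sqrt (∑ i, (Complex.abs (u i))^2))) := by
      calc Complex.abs (∫ x in (0:ℝ)..(2*Real.pi),
            Pf lam μ m ω₁ ω₂ K x * (starRingEnd ℂ) (gg v x) * gg u x)
          ≤ ∫ x in (0:ℝ)..(2*Real.pi),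
              Complex.abs (Pf lam μ m ω₁ ω₂ K x * (starRingEnd ℂ) (gg v x) * gg u x) := by
            simpa [Complex.norm_eq_abs] using
              intervalIntegral.norm_integral_le_integral_norm (μ := MeasureTheory.volume)
                (f := fun x => Pf lam μ m ω₁ ω₂ K x * (starRingEnd ℂ) (gg v x) * gg u x)
                (by positivity : (0:ℝ) ≤ 2*Real.pi)
        _ ≤ ∫ x in (0:ℝ)..(2*Real.pi),
              M0 * (Complex.abs (gg v x) * Complex.abs (gg u x)) := by
            apply intervalIntegral.integral_mono_on (by positivity)
            · apply Continuous.intervalIntegrable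
              exact Complex.continuous_abs.comp
                ((hPfcont.mul (continuous_conj.comp hggv)).mul hggu)
            · apply Continuous.intervalIntegrable
              exact continuous_const.mul
                ((Complex.continuous_abs.comp hggv).mul (Complex.continuous_abs.comp hggu))
            · intro x hx
              rw [map_mul, map_mul, Complex.abs_conj]
              have := hPB x hx
              have h2 : (0:ℝ) ≤ Complex.abs (gg v x) * Complex.abs (gg u x) := by positivity
              calc Complex.abs (Pf lam μ m ω₁ ω₂ K x) * Complex.abs (gg v x) * Complex.abs (gg u x)
                  = Complex.abs (Pf lam μ m ω₁ ω₂ K x) * (Complex.abs (gg v x) * Complex.abs (gg u x)) := by ring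
                _ ≤ M0 * (Complex.abs (gg v x) * Complex.abs (gg u x)) :=
                    mul_le_mul_of_nonneg_right (hPB x hx) h2
        _ = M0 * ∫ x in (0:ℝ)..(2*Real.pi), Complex.abs (gg v x) * Complex.abs (gg u x) :=
            intervalIntegral.integral_const_mul _ _
        _ ≤ M0 * (2*Real.pi * (Real.sqrt (∑ i, (Complex.abs (v i))^2) *
              Real.sqrt (∑ i, (Complex.abs (u i))^2))) :=
            mul_le_mul_of_nonneg_left (cs v u) hM0
    rw [hI, map_mul, Complex.abs_ofReal,
      _root_.abs_of_nonneg (by positivity : (0:ℝ) ≤ 2*Real.pi)] at habs1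
    have hnv : ‖v‖ = Real.sqrt (∑ i, (Complex.abs (v i))^2) := by
      rw [EuclideanSpace.norm_eq]
      congr 1
    have hnu : ‖u‖ = Real.sqrt (∑ i, (Complex.abs (u i))^2) := by
      rw [EuclideanSpace.norm_eq]
      congr 1
    rw [hnv, hnu]
    have hpi : (0:ℝ) < 2*Real.pi := by positivity
    nlinarith [habs1]
  -- conclude operator norm bound
  refine ContinuousLinearMap.opNorm_le_bound _ hM0 fun u => ?_
  set T := Matrix.toEuclideanCLM (𝕜 := ℂ) E with hT
  have hinner : (inner ℂ (T u) (T u) : ℂ)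
      = ∑ i : Fin N, ∑ j : Fin N, (starRingEnd ℂ) ((T u) i) * E i j * u j := by
    rw [PiLp.inner_apply]
    refine Finset.sum_congr rfl fun i _ => ?_
    have happ : (T u) i = ∑ j : Fin N, E i j * u j := rfl
    calc (inner ℂ ((T u) i) ((T u) i) : ℂ) = (starRingEnd ℂ) ((T u) i) * ((T u) i) := RCLike.inner_apply' _ _
      _ = (starRingEnd ℂ) ((T u) i) * ∑ j : Fin N, E i j * u j := by rw [← happ]
      _ = ∑ j : Fin N, (starRingEnd ℂ) ((T u) i) * E i j * u j := by
          rw [Finset.mul_sum]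
          exact Finset.sum_congr rfl fun j _ => by ring
  have hsq : ‖T u‖^2 ≤ M0 * (‖T u‖ * ‖u‖) := by
    have h1 : (inner ℂ (T u) (T u) : ℂ) = ((‖T u‖:ℝ) : ℂ)^2 := inner_self_eq_norm_sq_to_K (T u)
    have h2 := hQF (T u) u
    rw [← hinner, h1] at h2
    calc ‖T u‖^2 = Complex.abs (((‖T u‖:ℝ):ℂ)^2) := by
          rw [map_pow, Complex.abs_ofReal, _root_.abs_of_nonneg (norm_nonneg _)]
      _ ≤ M0 * (‖T u‖ * ‖u‖) := h2
  by_cases h0 : ‖T u‖ = 0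
  · rw [h0]; positivity
  · have hpos : 0 < ‖T u‖ := lt_of_le_of_ne (norm_nonneg _) (Ne.symm h0)
    nlinarith [hsq]

theorem stmt_19 (lam μ : ℂ) (hlam : ‖lam‖ < 1) (hμ : ‖μ‖ < 1)
    (m : ℕ) (hm : 0 < m) (ω₁ ω₂ : ℝ) (N : ℕ) (hN : 0 < N)
    (E : Matrix (Fin N) (Fin N) ℂ)
    (hE0 : ∀ i j : Fin N, (i : ℕ) ≤ (j : ℕ) → E i j = 0)
    (hE1 : ∀ i j : Fin N, (i : ℕ) = (j : ℕ) + 1 →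
      E i j = (1 - (ω₂ : ℂ)) * (1 - (ω₁ : ℂ)) * (lam ^ m - μ))
    (hE2 : ∀ i j : Fin N, (i : ℕ) = (j : ℕ) + 2 →
      E i j = (1 - (ω₂ : ℂ)) * (1 - (ω₁ : ℂ)) * μ * (lam ^ m - μ) +
        ((ω₂ : ℂ) * (1 - (ω₁ : ℂ)) + (ω₁ : ℂ) * (1 - (ω₂ : ℂ))) * (lam ^ m - μ) * lam ^ m)
    (hE3 : ∀ i j : Fin N, (j : ℕ) + 3 ≤ (i : ℕ) →
      E i j = (1 - (ω₂ : ℂ)) * (1 - (ω₁ : ℂ)) * μ ^ ((i : ℕ) - (j : ℕ) - 1) * (lam ^ m - μ) +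
        ((ω₂ : ℂ) * (1 - (ω₁ : ℂ)) + (ω₁ : ℂ) * (1 - (ω₂ : ℂ))) *
          μ ^ ((i : ℕ) - (j : ℕ) - 2) * (lam ^ m - μ) * lam ^ m +
        (ω₂ : ℂ) * (ω₁ : ℂ) * μ ^ ((i : ℕ) - (j : ℕ) - 3) * (lam ^ m - μ) * lam ^ (2 * m)) :
    ‖Matrix.toEuclideanCLM (𝕜 := ℂ) E‖ ≤
      sSup ((fun x : ℝ =>
          ‖lam ^ m - μ‖ *
            ‖(1 - (ω₂ : ℂ)) * (1 - (ω₁ : ℂ)) +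
              Complex.exp (Complex.I * (x : ℂ)) *
                ((ω₂ : ℂ) * (1 - (ω₁ : ℂ)) + (ω₁ : ℂ) * (1 - (ω₂ : ℂ))) * lam ^ m +
              Complex.exp (2 * Complex.I * (x : ℂ)) * (ω₂ : ℂ) * (ω₁ : ℂ) * lam ^ (2 * m)‖ /
            ‖1 - Complex.exp (Complex.I * (x : ℂ)) * μ‖) ''
        Set.Icc 0 (2 * Real.pi)) := by
  change Complex.abs lam < 1 at hlam
  change Complex.abs μ < 1 at hμ
  set F : ℝ → ℝ := (fun x : ℝ =>
          Complex.abs (lam ^ m - μ) *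
            Complex.abs ((1 - (ω₂ : ℂ)) * (1 - (ω₁ : ℂ)) +
              Complex.exp (Complex.I * (x : ℂ)) *
                ((ω₂ : ℂ) * (1 - (ω₁ : ℂ)) + (ω₁ : ℂ) * (1 - (ω₂ : ℂ))) * lam ^ m +
              Complex.exp (2 * Complex.I * (x : ℂ)) * (ω₂ : ℂ) * (ω₁ : ℂ) * lam ^ (2 * m)) /
            Complex.abs (1 - Complex.exp (Complex.I * (x : ℂ)) * μ)) with hFdef
  set C := sSup (F '' Set.Icc 0 (2 * Real.pi)) with hCdef
  -- basic facts
  have habsz : ∀ x : ℝ, Complex.abs (Complex.exp (Complex.I * (x:ℂ))) = 1 := by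
    intro x
    rw [Complex.abs_exp]
    norm_num [Complex.mul_re]
  have hden : ∀ x : ℝ, (1 - Complex.exp (Complex.I * (x:ℂ)) * μ) ≠ 0 := by
    intro x h
    have h1 : Complex.exp (Complex.I * (x:ℂ)) * μ = 1 := by
      have := sub_eq_zero.mp h; exact this.symm
    have := congrArg Complex.abs h1
    rw [map_mul, habsz x, one_mul] at this
    simp at this
    rw [this] at hμ
    exact lt_irrefl _ hμ
  have hFcont : Continuous F := by
    rw [hFdef]
    apply Continuous.div
    · apply Continuous.mul continuous_const
      apply Complex.continuous_abs.comp
      fun_prop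
    · apply Complex.continuous_abs.comp
      fun_prop
    · intro x
      exact (map_ne_zero Complex.abs).mpr (hden x)
  have hBdd : BddAbove (F '' Set.Icc 0 (2 * Real.pi)) :=
    (isCompact_Icc.image hFcont).bddAbove
  have hfC : ∀ x ∈ Set.Icc (0:ℝ) (2*Real.pi), F x ≤ C :=
    fun x hx => le_csSup hBdd ⟨x, hx, rfl⟩
  have hC0 : (0:ℝ) ≤ C := by
    refine le_trans ?_ (hfC 0 ⟨le_refl _, by positivity⟩)
    rw [hFdef]
    positivity
  -- the key estimate for each K ≥ N
  have hKey : ∀ K : ℕ, N ≤ K →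
      ‖Matrix.toEuclideanCLM (𝕜 := ℂ) E‖ ≤ C * (1 + Complex.abs μ ^ (K+1)) := by
    intro K hK
    have hM0 : (0:ℝ) ≤ C * (1 + Complex.abs μ ^ (K+1)) :=
      mul_nonneg hC0 (by positivity)
    refine opnorm_le lam μ m ω₁ ω₂ E hE0 hE1 hE2 hE3 K hK _ hM0 ?_
    intro x hx
    refine (Pf_bound lam μ hμ m ω₁ ω₂ K x).trans ?_
    have hfx := hfC x hx
    simp only [hFdef] at hfx
    exact mul_le_mul_of_nonneg_right hfx (by positivity)
  -- limit argument
  have hlim : Filter.Tendsto (fun K : ℕ => C * (1 + Complex.abs μ ^ (K+1)))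
      Filter.atTop (nhds C) := by
    have h1 : Filter.Tendsto (fun K : ℕ => Complex.abs μ ^ (K+1)) Filter.atTop (nhds 0) := by
      have := tendsto_pow_atTop_nhds_zero_of_lt_one (Complex.abs.nonneg μ) hμ
      exact this.comp (Filter.tendsto_add_atTop_nat 1)
    have h2 : Filter.Tendsto (fun K : ℕ => C * (1 + Complex.abs μ ^ (K+1)))
        Filter.atTop (nhds (C * (1 + 0))) := (Filter.Tendsto.const_add 1 h1).const_mul C
    simpa using h2
  exact ge_of_tendsto hlim (Filter.eventually_atTop.2 ⟨N, fun K hK => hKey K hK⟩)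
end
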